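/- Let E be a Hermitian holomorphic vector bundle over a complex manifold X with metric h. If E is Griffiths positive with constant c, i.e. the Hermitian form Θ̃_{E,h}(ξ⊗v) ≥ c|ξ⊗v|² for all decomposable tensors ξ⊗v ∈ T_X ⊗ E, then E ⊗ det(E) is Nakano positive with the same constant: Θ̃_{E⊗det E, h}(τ) ≥ c|τ|² for all tensors τ ∈ T_X ⊗ (E ⊗ det E). -/

import Mathlib

open Complex Finset


noncomputable def chii (k : ZMod 4) : ℂ := Complex.I ^ k.val

lemma I_pow_mod (a : ℕ) : Complex.I ^ (a % 4) = Complex.I ^ a := by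
  conv_rhs => rw [← Nat.div_add_mod a 4]
  rw [pow_add, pow_mul, Complex.I_pow_four, one_pow, one_mul]

lemma chii_zero : chii 0 = 1 := by simp [chii]

lemma chii_add (x y : ZMod 4) : chii (x + y) = chii x * chii y := by
  rw [chii, chii, chii, ZMod.val_add, I_pow_mod, pow_add]

lemma chii_ne_zero (x : ZMod 4) : chii x ≠ 0 := pow_ne_zero _ Complex.I_ne_zero

lemma chii_normSq (x : ZMod 4) : Complex.normSq (chii x) = 1 := by
  rw [chii, map_pow, Complex.normSq_I, one_pow]

lemma chii_conj (x : ZMod 4) : (starRingEnd ℂ) (chii x) = chii (-x) := by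
  have h2 : chii (-x) * chii x = 1 := by rw [← chii_add, neg_add_cancel, chii_zero]
  have h3 : (starRingEnd ℂ) (chii x) * chii x = 1 := by
    rw [mul_comm, Complex.mul_conj, chii_normSq, Complex.ofReal_one]
  exact mul_right_cancel₀ (chii_ne_zero x) (h3.trans h2.symm)

lemma chii_one : chii 1 = Complex.I := by
  have : (1 : ZMod 4).val = 1 := rfl
  rw [chii, this, pow_one]

lemma chii_two : chii 2 = -1 := by
  have : (2 : ZMod 4).val = 2 := rfl
  rw [chii, this, Complex.I_sq]

lemma chii_three : chii 3 = -Complex.I := by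
  have : (3 : ZMod 4).val = 3 := rfl
  rw [chii, this, pow_succ, Complex.I_sq]; ring

lemma zmod4_univ : (Finset.univ : Finset (ZMod 4)) = {0, 1, 2, 3} := by decide

lemma sum_chii_eq (f : ZMod 4 → ℂ) : ∑ x : ZMod 4, f x = f 0 + f 1 + f 2 + f 3 := by
  rw [zmod4_univ]
  rw [show ({0,1,2,3} : Finset (ZMod 4)) = insert 0 (insert 1 (insert 2 ({3} : Finset (ZMod 4)))) from rfl]
  rw [Finset.sum_insert (by decide), Finset.sum_insert (by decide), Finset.sum_insert (by decide), Finset.sum_singleton]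
  ring

lemma sum_chii_single (d : ZMod 4) (hd : d ≠ 0) : ∑ x : ZMod 4, chii (x * d) = 0 := by
  have h : d = 1 ∨ d = 2 ∨ d = 3 := by revert hd; revert d; decide
  rcases h with rfl | rfl | rfl <;> rw [sum_chii_eq]
  · rw [show (0:ZMod 4)*1 = 0 by decide, show (1:ZMod 4)*1 = 1 by decide,
      show (2:ZMod 4)*1 = 2 by decide, show (3:ZMod 4)*1 = 3 by decide,
      chii_zero, chii_one, chii_two, chii_three]; ring
  · rw [show (0:ZMod 4)*2 = 0 by decide, show (1:ZMod 4)*2 = 2 by decide,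
      show (2:ZMod 4)*2 = 0 by decide, show (3:ZMod 4)*2 = 2 by decide,
      chii_zero, chii_two]; ring
  · rw [show (0:ZMod 4)*3 = 0 by decide, show (1:ZMod 4)*3 = 3 by decide,
      show (2:ZMod 4)*3 = 2 by decide, show (3:ZMod 4)*3 = 1 by decide,
      chii_zero, chii_one, chii_two, chii_three]; ring

lemma chii_sum {ι : Type*} (s : Finset ι) (f : ι → ZMod 4) :
    chii (∑ t ∈ s, f t) = ∏ t ∈ s, chii (f t) := by
  induction s using Finset.cons_induction with
  | empty => simp [chii_zero]
  | cons a s ha ih => rw [Finset.sum_cons, Finset.prod_cons, chii_add, ih]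

lemma sum_chii_pi {m : ℕ} (d : Fin m → ZMod 4) :
    ∑ ε : Fin m → ZMod 4, chii (∑ t, ε t * d t) = if d = 0 then (4:ℂ)^m else 0 := by
  have key : ∑ ε : Fin m → ZMod 4, chii (∑ t, ε t * d t)
      = ∏ t, ∑ x : ZMod 4, chii (x * d t) := by
    rw [Finset.prod_univ_sum]
    simp [chii_sum]
  rw [key]
  by_cases hd : d = 0
  · subst hd
    simp only [Pi.zero_apply, mul_zero, chii_zero, if_pos rfl]
    simp [Finset.card_univ]
  · rw [if_neg hd]
    obtain ⟨t0, ht0⟩ : ∃ t, d t ≠ 0 := by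
      by_contra h; push_neg at h; exact hd (funext h)
    exact Finset.prod_eq_zero (Finset.mem_univ t0) (sum_chii_single _ ht0)

lemma S2 {m : ℕ} (a b : Fin m) :
    ∑ ε : Fin m → ZMod 4, chii (ε b - ε a) = if a = b then (4:ℂ)^m else 0 := by
  have h1 : ∀ ε : Fin m → ZMod 4,
      ε b - ε a = ∑ t, ε t * ((if t = b then 1 else 0) - (if t = a then 1 else 0)) := by
    intro ε
    simp only [mul_sub, mul_ite, mul_one, mul_zero]
    rw [Finset.sum_sub_distrib]
    simp [Finset.sum_ite_eq']
  calc ∑ ε : Fin m → ZMod 4, chii (ε b - ε a)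
      = ∑ ε : Fin m → ZMod 4, chii (∑ t, ε t * ((if t = b then 1 else 0) - (if t = a then 1 else 0))) := by
        refine Finset.sum_congr rfl fun ε _ => by rw [← h1]
    _ = if (fun t : Fin m => (if t = b then (1:ZMod 4) else 0) - (if t = a then 1 else 0)) = 0 then (4:ℂ)^m else 0 := sum_chii_pi _
    _ = if a = b then (4:ℂ)^m else 0 := by
        congr 1
        simp only [eq_iff_iff]
        constructor
        · intro h
          by_contra hab
          have hb := congrFun h b
          simp only [Pi.zero_apply] at hb
          rw [if_true, if_neg (fun h' : b = a => hab h'.symm)] at hb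
          exact absurd hb (by decide)
        · rintro rfl
          funext t; simp

lemma S4 {m : ℕ} (a b l u : Fin m) :
    ∑ ε : Fin m → ZMod 4, chii (ε b + ε l - ε a - ε u)
      = if (a = b ∧ l = u) ∨ (a = l ∧ b = u) then (4:ℂ)^m else 0 := by
  set d : Fin m → ZMod 4 := fun t =>
    (if t = b then 1 else 0) + (if t = l then 1 else 0)
      - (if t = a then 1 else 0) - (if t = u then 1 else 0) with hd
  have h1 : ∀ ε : Fin m → ZMod 4, ε b + ε l - ε a - ε u = ∑ t, ε t * d t := by
    intro ε
    simp only [hd, mul_add, mul_sub, mul_ite, mul_one, mul_zero]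
    rw [Finset.sum_sub_distrib, Finset.sum_sub_distrib, Finset.sum_add_distrib]
    simp [Finset.sum_ite_eq']
  calc ∑ ε : Fin m → ZMod 4, chii (ε b + ε l - ε a - ε u)
      = ∑ ε : Fin m → ZMod 4, chii (∑ t, ε t * d t) := by
        refine Finset.sum_congr rfl fun ε _ => by rw [← h1]
    _ = if d = 0 then (4:ℂ)^m else 0 := sum_chii_pi _
    _ = if (a = b ∧ l = u) ∨ (a = l ∧ b = u) then (4:ℂ)^m else 0 := by
        congr 1
        simp only [eq_iff_iff]
        constructor
        · intro h
          have he : ∀ t, ((if t = b then (1:ZMod 4) else 0) + (if t = l then 1 else 0)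
              - (if t = a then 1 else 0) - (if t = u then 1 else 0)) = 0 := by
            intro t
            have := congrFun h t
            simpa only [hd, Pi.zero_apply] using this
          by_cases hab : a = b
          · left
            refine ⟨hab, ?_⟩
            by_contra hlu
            have h0 := he l
            rw [if_pos rfl, if_neg hlu] at h0
            by_cases hla : l = a
            · rw [if_pos (hla.trans hab), if_pos hla] at h0
              exact absurd h0 (by decide)
            · rw [if_neg (fun h' : l = b => hla (h'.trans hab.symm)), if_neg hla] at h0
              exact absurd h0 (by decide)
          · right
            have h0 := he b
            rw [if_pos rfl, if_neg (fun h' : b = a => hab h'.symm)] at h0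
            by_cases hbl : b = l
            · rw [if_pos hbl] at h0
              by_cases hbu : b = u
              · rw [if_pos hbu] at h0; exact absurd h0 (by decide)
              · rw [if_neg hbu] at h0; exact absurd h0 (by decide)
            · rw [if_neg hbl] at h0
              by_cases hbu : b = u
              · refine ⟨?_, hbu⟩
                have h2 := he a
                rw [if_neg hab, if_pos rfl,
                  if_neg (fun h' : a = u => hab (h'.trans hbu.symm))] at h2
                by_cases hal : a = l
                · exact hal
                · rw [if_neg hal] at h2; exact absurd h2 (by decide)
              · rw [if_neg hbu] at h0; exact absurd h0 (by decide)
        · rintro (⟨rfl, rfl⟩ | ⟨rfl, rfl⟩) <;>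
            · funext t
              show (if t = _ then (1:ZMod 4) else 0) + (if t = _ then 1 else 0)
                - (if t = _ then 1 else 0) - (if t = _ then 1 else 0) = 0
              ring

lemma chii_comb (p q r s : ZMod 4) :
    chii (q + r - p - s) = chii (-p) * chii q * chii r * chii (-s) := by
  rw [← chii_add, ← chii_add, ← chii_add]; congr 1; ring

lemma chii_sub (x y : ZMod 4) : chii (x - y) = chii (-y) * chii x := by
  rw [← chii_add]; congr 1; ring


/-- Demailly's lemma: Griffiths positivity of `E` (with constant `c`) implies
Nakano positivity of `E ⊗ det E` (with the same constant), expressed in terms of the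
curvature coefficients `cf j k l u` of `E` in a local chart with orthonormal frame.
The curvature of `E ⊗ det E` has coefficients
`cf j k l u + δ_{l u} * ∑ ν, cf j k ν ν`. -/
theorem griffiths_pos_implies_nakano_pos_tensor_det
    (n m : ℕ) (cf : Fin n → Fin n → Fin m → Fin m → ℂ)
    (hherm : ∀ j k l u, cf j k l u = starRingEnd ℂ (cf k j u l))
    (c : ℝ) (hc : 0 ≤ c)
    (hGriffiths : ∀ (ξ : Fin n → ℂ) (v : Fin m → ℂ),
      c * ((∑ j, Complex.normSq (ξ j)) * (∑ l, Complex.normSq (v l))) ≤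
        (∑ j, ∑ k, ∑ l, ∑ u,
          cf j k l u * ξ j * starRingEnd ℂ (ξ k) * v l * starRingEnd ℂ (v u)).re) :
    ∀ τ : Fin n → Fin m → ℂ,
      c * (∑ j, ∑ l, Complex.normSq (τ j l)) ≤
        (∑ j, ∑ k, ∑ l, ∑ u,
          (cf j k l u + (if l = u then ∑ ν, cf j k ν ν else 0)) *
            τ j l * starRingEnd ℂ (τ k u)).re := by
  intro τ
  classical
  set Cj := starRingEnd ℂ with hCj
  set ξ : (Fin m → ZMod 4) → Fin n → ℂ := fun ε j => ∑ a, τ j a * chii (-(ε a)) with hξ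
  set Θ : (Fin m → ZMod 4) → ℂ := fun ε => ∑ j, ∑ k, ∑ l, ∑ u,
      cf j k l u * ξ ε j * Cj (ξ ε k) * chii (ε l) * Cj (chii (ε u)) with hΘ
  set G : ℂ := ∑ j, ∑ k, ∑ l, ∑ u,
      (cf j k l u + (if l = u then ∑ ν, cf j k ν ν else 0)) * τ j l * Cj (τ k u) with hG
  set R : ℂ := ∑ j, ∑ k, ∑ l, cf j k l l * (τ j l * Cj (τ k l)) with hR
  -- conjugate of ξ
  have hconj : ∀ ε k, Cj (ξ ε k) = ∑ b, Cj (τ k b) * chii (ε b) := by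
    intro ε k
    rw [hξ, hCj]
    simp only [map_sum, map_mul, chii_conj, neg_neg]
  -- expansion of the quartic monomial
  have expand : ∀ (ε : Fin m → ZMod 4) j k l u,
      cf j k l u * ξ ε j * Cj (ξ ε k) * chii (ε l) * Cj (chii (ε u))
        = ∑ a, ∑ b, cf j k l u * (τ j a * Cj (τ k b)) * chii (ε b + ε l - ε a - ε u) := by
    intro ε j k l u
    rw [hconj, hCj]
    simp only [chii_conj]
    rw [hξ]
    simp only [Finset.sum_mul, Finset.mul_sum]
    rw [Finset.sum_comm]
    refine Finset.sum_congr rfl fun a _ => Finset.sum_congr rfl fun b _ => ?_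
    rw [chii_comb (ε a) (ε b) (ε l) (ε u)]
    ring
  -- swap the ε-sum inside
  have hswap : ∑ ε : Fin m → ZMod 4, Θ ε
      = ∑ j, ∑ k, ∑ l, ∑ u, ∑ a, ∑ b, cf j k l u * (τ j a * Cj (τ k b)) *
          ∑ ε : Fin m → ZMod 4, chii (ε b + ε l - ε a - ε u) := by
    rw [hΘ]
    simp only [expand]
    rw [Finset.sum_comm]
    refine Finset.sum_congr rfl fun j _ => ?_
    rw [Finset.sum_comm]
    refine Finset.sum_congr rfl fun k _ => ?_
    rw [Finset.sum_comm]
    refine Finset.sum_congr rfl fun l _ => ?_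
    rw [Finset.sum_comm]
    refine Finset.sum_congr rfl fun u _ => ?_
    rw [Finset.sum_comm]
    refine Finset.sum_congr rfl fun a _ => ?_
    rw [Finset.sum_comm]
    refine Finset.sum_congr rfl fun b _ => ?_
    exact (Finset.mul_sum _ _ _).symm
  -- collapse the inner double sum using the orthogonality relations
  have inner : ∀ (j k : Fin n) (l u : Fin m),
      (∑ a, ∑ b, cf j k l u * (τ j a * Cj (τ k b)) *
          (if (a = b ∧ l = u) ∨ (a = l ∧ b = u) then (4:ℂ)^m else 0))
      = (4:ℂ)^m * (cf j k l u * ((if l = u then ∑ a, τ j a * Cj (τ k a) else 0)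
          + τ j l * Cj (τ k u) - (if l = u then τ j l * Cj (τ k l) else 0))) := by
    intro j k l u
    by_cases hlu : l = u
    · subst hlu
      have hcond : ∀ a b : Fin m, (a = b ∨ (a = l ∧ b = l)) ↔ a = b := by
        intro a b
        constructor
        · rintro (h | ⟨rfl, rfl⟩)
          · exact h
          · rfl
        · exact Or.inl
      simp only [eq_self_iff_true, and_true, if_true, hcond]
      calc ∑ a, ∑ b, cf j k l l * (τ j a * Cj (τ k b)) * (if a = b then (4:ℂ)^m else 0)
          = ∑ a, τ j a * Cj (τ k a) * (cf j k l l * (4:ℂ)^m) := by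
            refine Finset.sum_congr rfl fun a _ => ?_
            rw [Finset.sum_eq_single a]
            · rw [if_pos rfl]; ring
            · intro b _ hba; rw [if_neg (fun h => hba h.symm), mul_zero]
            · intro h; exact absurd (Finset.mem_univ a) h
        _ = (4:ℂ)^m * (cf j k l l * ((∑ a, τ j a * Cj (τ k a))
              + τ j l * Cj (τ k l) - τ j l * Cj (τ k l))) := by
            rw [← Finset.sum_mul]; ring
    · have hcond : ∀ a b : Fin m, ((a = b ∧ l = u) ∨ (a = l ∧ b = u)) ↔ (a = l ∧ b = u) := by
        intro a b
        constructor
        · rintro (⟨-, h⟩ | h)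
          · exact absurd h hlu
          · exact h
        · exact Or.inr
      simp only [hcond, if_neg hlu, ite_and]
      calc ∑ a, ∑ b, cf j k l u * (τ j a * Cj (τ k b)) *
              (if a = l then if b = u then (4:ℂ)^m else 0 else 0)
          = cf j k l u * (τ j l * Cj (τ k u)) * (4:ℂ)^m := by
            rw [Finset.sum_eq_single l]
            · rw [Finset.sum_eq_single u]
              · rw [if_pos rfl, if_pos rfl]
              · intro b _ hbu; rw [if_pos rfl, if_neg hbu, mul_zero]
              · intro h; exact absurd (Finset.mem_univ u) h
            · intro a _ hal
              refine Finset.sum_eq_zero fun b _ => ?_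
              rw [if_neg hal, mul_zero]
            · intro h; exact absurd (Finset.mem_univ l) h
        _ = (4:ℂ)^m * (cf j k l u * (0 + τ j l * Cj (τ k u) - 0)) := by ring
  -- the trace-term identification
  have hTr : ∀ j k : Fin n, (∑ l, ∑ u, cf j k l u * (if l = u then (∑ a, τ j a * Cj (τ k a)) else 0))
      = ∑ l, ∑ u, (if l = u then ∑ ν, cf j k ν ν else 0) * τ j l * Cj (τ k u) := by
    intro j k
    have hL : ∀ l : Fin m, ∑ u, cf j k l u * (if l = u then (∑ a, τ j a * Cj (τ k a)) else 0)
        = cf j k l l * (∑ a, τ j a * Cj (τ k a)) := by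
      intro l
      rw [Finset.sum_eq_single l]
      · rw [if_pos rfl]
      · intro u _ hul; rw [if_neg (fun h => hul h.symm), mul_zero]
      · intro h; exact absurd (Finset.mem_univ l) h
    have hRr : ∀ l : Fin m, ∑ u, (if l = u then ∑ ν, cf j k ν ν else 0) * τ j l * Cj (τ k u)
        = (∑ ν, cf j k ν ν) * (τ j l * Cj (τ k l)) := by
      intro l
      rw [Finset.sum_eq_single l]
      · rw [if_pos rfl]; ring
      · intro u _ hul; rw [if_neg (fun h => hul h.symm), zero_mul, zero_mul]
      · intro h; exact absurd (Finset.mem_univ l) h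
    simp only [hL, hRr]
    rw [← Finset.sum_mul, ← Finset.mul_sum]
  have hC : ∀ j k : Fin n, (∑ l, ∑ u, cf j k l u * (if l = u then τ j l * Cj (τ k l) else 0))
      = ∑ l, cf j k l l * (τ j l * Cj (τ k l)) := by
    intro j k
    refine Finset.sum_congr rfl fun l _ => ?_
    rw [Finset.sum_eq_single l]
    · rw [if_pos rfl]
    · intro u _ hul; rw [if_neg (fun h => hul h.symm), mul_zero]
    · intro h; exact absurd (Finset.mem_univ l) h
  -- per (j,k) splitting identity
  have hjk : ∀ j k : Fin n,
      ∑ l, ∑ u, cf j k l u * ((if l = u then ∑ a, τ j a * Cj (τ k a) else 0)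
          + τ j l * Cj (τ k u) - (if l = u then τ j l * Cj (τ k l) else 0))
      = (∑ l, ∑ u, (cf j k l u + (if l = u then ∑ ν, cf j k ν ν else 0)) * τ j l * Cj (τ k u))
          - ∑ l, cf j k l l * (τ j l * Cj (τ k l)) := by
    intro j k
    have lhs1 : ∑ l, ∑ u, cf j k l u * ((if l = u then ∑ a, τ j a * Cj (τ k a) else 0)
          + τ j l * Cj (τ k u) - (if l = u then τ j l * Cj (τ k l) else 0))
        = (∑ l, ∑ u, cf j k l u * (if l = u then ∑ a, τ j a * Cj (τ k a) else 0))
          + (∑ l, ∑ u, cf j k l u * τ j l * Cj (τ k u))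
          - ∑ l, ∑ u, cf j k l u * (if l = u then τ j l * Cj (τ k l) else 0) := by
      simp only [mul_add, mul_sub, Finset.sum_add_distrib, Finset.sum_sub_distrib, mul_assoc]
    have rhs1 : (∑ l, ∑ u, (cf j k l u + (if l = u then ∑ ν, cf j k ν ν else 0)) * τ j l * Cj (τ k u))
        = (∑ l, ∑ u, cf j k l u * τ j l * Cj (τ k u))
          + ∑ l, ∑ u, (if l = u then ∑ ν, cf j k ν ν else 0) * τ j l * Cj (τ k u) := by
      simp only [add_mul, Finset.sum_add_distrib]
    rw [lhs1, rhs1, hTr j k, hC j k]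
    ring
  -- the master identity
  have hsum4 : ∑ ε : Fin m → ZMod 4, Θ ε = (4:ℂ)^m * G - (4:ℂ)^m * R := by
    rw [hswap]
    simp only [S4, inner]
    calc ∑ j, ∑ k, ∑ l, ∑ u, (4:ℂ)^m * (cf j k l u * ((if l = u then ∑ a, τ j a * Cj (τ k a) else 0)
            + τ j l * Cj (τ k u) - (if l = u then τ j l * Cj (τ k l) else 0)))
        = ∑ j, ∑ k, (4:ℂ)^m * ((∑ l, ∑ u, (cf j k l u + (if l = u then ∑ ν, cf j k ν ν else 0)) * τ j l * Cj (τ k u))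
            - ∑ l, cf j k l l * (τ j l * Cj (τ k l))) := by
          refine Finset.sum_congr rfl fun j _ => Finset.sum_congr rfl fun k _ => ?_
          simp only [← Finset.mul_sum]
          rw [hjk j k]
      _ = (4:ℂ)^m * G - (4:ℂ)^m * R := by
          rw [hG, hR]
          simp only [mul_sub, Finset.sum_sub_distrib, ← Finset.mul_sum]
  -- norm identity (complex form)
  have hnorm : ∑ ε : Fin m → ZMod 4, ∑ j, (ξ ε j * Cj (ξ ε j))
      = (4:ℂ)^m * ∑ j, ∑ a, τ j a * Cj (τ j a) := by
    have e : ∀ (ε : Fin m → ZMod 4) (j : Fin n), ξ ε j * Cj (ξ ε j)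
        = ∑ a, ∑ b, (τ j a * Cj (τ j b)) * chii (ε b - ε a) := by
      intro ε j
      rw [hconj, hξ]
      simp only [Finset.sum_mul, Finset.mul_sum]
      rw [Finset.sum_comm]
      refine Finset.sum_congr rfl fun a _ => Finset.sum_congr rfl fun b _ => ?_
      rw [chii_sub (ε b) (ε a)]
      ring
    simp only [e]
    rw [Finset.sum_comm]
    have e2 : ∀ j : Fin n, ∑ ε : Fin m → ZMod 4, ∑ a, ∑ b, (τ j a * Cj (τ j b)) * chii (ε b - ε a)
        = ∑ a, ∑ b, (τ j a * Cj (τ j b)) * ∑ ε : Fin m → ZMod 4, chii (ε b - ε a) := by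
      intro j
      rw [Finset.sum_comm]
      refine Finset.sum_congr rfl fun a _ => ?_
      rw [Finset.sum_comm]
      exact Finset.sum_congr rfl fun b _ => (Finset.mul_sum _ _ _).symm
    simp only [e2, S2]
    have e3 : ∀ (j : Fin n) (a : Fin m), ∑ b, (τ j a * Cj (τ j b)) * (if a = b then (4:ℂ)^m else 0)
        = τ j a * Cj (τ j a) * (4:ℂ)^m := by
      intro j a
      rw [Finset.sum_eq_single a]
      · rw [if_pos rfl]
      · intro b _ hba; rw [if_neg (fun h => hba h.symm), mul_zero]
      · intro h; exact absurd (Finset.mem_univ a) h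
    simp only [e3]
    rw [Finset.mul_sum]
    refine Finset.sum_congr rfl fun j _ => ?_
    rw [Finset.mul_sum]
    exact Finset.sum_congr rfl fun a _ => by ring
  -- norm identity (real form)
  have hA : ∑ ε : Fin m → ZMod 4, ∑ j, Complex.normSq (ξ ε j)
      = (4:ℝ)^m * ∑ j, ∑ l, Complex.normSq (τ j l) := by
    have h1 := hnorm
    simp only [hCj, Complex.mul_conj] at h1
    rw [show ((4:ℂ)^m) = (((4:ℝ)^m : ℝ) : ℂ) by push_cast; ring] at h1
    simp only [← Complex.ofReal_sum, ← Complex.ofReal_mul] at h1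
    exact_mod_cast h1
  -- Griffiths bound for each ε
  have hΘpos : ∀ ε : Fin m → ZMod 4, c * ((∑ j, Complex.normSq (ξ ε j)) * (m:ℝ)) ≤ (Θ ε).re := by
    intro ε
    have h := hGriffiths (ξ ε) (fun l => chii (ε l))
    simp only [chii_normSq, Finset.sum_const, Finset.card_univ, Fintype.card_fin,
      nsmul_eq_mul, mul_one] at h
    simpa [hΘ] using h
  -- Griffiths bound for the residue term R
  have hRpos : c * (∑ j, ∑ l, Complex.normSq (τ j l)) ≤ R.re := by
    have hcol : ∀ l : Fin m, c * (∑ j, Complex.normSq (τ j l))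
        ≤ (∑ j, ∑ k, cf j k l l * (τ j l * Cj (τ k l))).re := by
      intro l
      have h := hGriffiths (fun j => τ j l) (fun u => if u = l then 1 else 0)
      simp only [apply_ite Complex.normSq, Complex.normSq_one, Complex.normSq_zero,
        Finset.sum_ite_eq', Finset.mem_univ, if_true, mul_one, hCj,
        apply_ite (fun z : ℂ => (starRingEnd ℂ) z), map_one, map_zero,
        mul_ite, mul_zero] at h
      calc c * (∑ j, Complex.normSq (τ j l))
          ≤ (∑ j, ∑ k, cf j k l l * τ j l * Cj (τ k l)).re := by simpa [hCj] using h
        _ = (∑ j, ∑ k, cf j k l l * (τ j l * Cj (τ k l))).re := by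
            congr 1
            exact Finset.sum_congr rfl fun j _ => Finset.sum_congr rfl fun k _ => mul_assoc _ _ _
    calc c * (∑ j, ∑ l, Complex.normSq (τ j l))
        = ∑ l, c * (∑ j, Complex.normSq (τ j l)) := by
          rw [Finset.sum_comm (γ := Fin n) (α := Fin m)]
          rw [Finset.mul_sum]
      _ ≤ ∑ l, (∑ j, ∑ k, cf j k l l * (τ j l * Cj (τ k l))).re :=
          Finset.sum_le_sum fun l _ => hcol l
      _ = R.re := by
          rw [hR, ← Complex.re_sum]
          congr 1
          rw [Finset.sum_comm]
          exact Finset.sum_congr rfl fun j _ => Finset.sum_comm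
  -- assemble everything
  have hKpos : (0:ℝ) < (4:ℝ)^m := by positivity
  have hre : (4:ℝ)^m * G.re = (∑ ε : Fin m → ZMod 4, Θ ε).re + (4:ℝ)^m * R.re := by
    rw [hsum4, show ((4:ℂ)^m) = (((4:ℝ)^m : ℝ) : ℂ) by push_cast; ring]
    simp only [Complex.sub_re, Complex.re_ofReal_mul]
    ring
  have hsumΘ : c * ((4:ℝ)^m * ∑ j, ∑ l, Complex.normSq (τ j l)) * (m:ℝ)
      ≤ (∑ ε : Fin m → ZMod 4, Θ ε).re := by
    rw [Complex.re_sum]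
    have e4 : ∑ ε : Fin m → ZMod 4, c * ((∑ j, Complex.normSq (ξ ε j)) * (m:ℝ))
        = c * ((4:ℝ)^m * ∑ j, ∑ l, Complex.normSq (τ j l)) * (m:ℝ) := by
      calc ∑ ε : Fin m → ZMod 4, c * ((∑ j, Complex.normSq (ξ ε j)) * (m:ℝ))
          = ∑ ε : Fin m → ZMod 4, (c * (m:ℝ)) * (∑ j, Complex.normSq (ξ ε j)) := by
            exact Finset.sum_congr rfl fun ε _ => by ring
        _ = (c * (m:ℝ)) * ∑ ε : Fin m → ZMod 4, (∑ j, Complex.normSq (ξ ε j)) :=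
            (Finset.mul_sum _ _ _).symm
        _ = c * ((4:ℝ)^m * ∑ j, ∑ l, Complex.normSq (τ j l)) * (m:ℝ) := by rw [hA]; ring
    rw [← e4]
    exact Finset.sum_le_sum fun ε _ => hΘpos ε
  have hmulR : (4:ℝ)^m * (c * (∑ j, ∑ l, Complex.normSq (τ j l))) ≤ (4:ℝ)^m * R.re :=
    mul_le_mul_of_nonneg_left hRpos (le_of_lt hKpos)
  have hT : 0 ≤ ∑ j, ∑ l, Complex.normSq (τ j l) :=
    Finset.sum_nonneg fun j _ => Finset.sum_nonneg fun l _ => Complex.normSq_nonneg _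
  have hnn : 0 ≤ c * ((4:ℝ)^m * ∑ j, ∑ l, Complex.normSq (τ j l)) * (m:ℝ) :=
    mul_nonneg (mul_nonneg hc (mul_nonneg (le_of_lt hKpos) hT)) (Nat.cast_nonneg m)
  have hfinal : (4:ℝ)^m * (c * (∑ j, ∑ l, Complex.normSq (τ j l))) ≤ (4:ℝ)^m * G.re := by
    linarith
  exact (mul_le_mul_iff_right₀ hKpos).mp hfinal
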